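/- (Proposition 2) Let G_k=(V,E,k) be a strongly connected labeled simple digraph and let G_ℰ=(V,ℰ) be a chain graph. Then the core matrix 𝒜_{k,ℰ} ∈ ℝ^{ℰ×ℰ}, i.e. the unique matrix with A_k diag(K_k) = −I_ℰ 𝒜_{k,ℰ} I_ℰ^T, has all entries nonnegative and all diagonal entries positive. -/

import Mathlib

open Matrix BigOperators Finset

variable {V : Type*}

/-- Directed reachability in the digraph with edge set `F`. -/
def dReach (F : Finset (V × V)) : V → V → Prop :=
  Relation.ReflTransGen fun a b => (a, b) ∈ F

/-- Reachability in the underlying undirected graph of the digraph with edge set `F`. -/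
def uReach (F : Finset (V × V)) : V → V → Prop :=
  Relation.ReflTransGen fun a b => (a, b) ∈ F ∨ (b, a) ∈ F

/-- A digraph is strongly connected if every vertex reaches every other vertex. -/
def StronglyConnected (F : Finset (V × V)) : Prop :=
  ∀ i j : V, dReach F i j

/-- A simple digraph has no self-loops. -/
def NoSelfLoops (F : Finset (V × V)) : Prop :=
  ∀ e ∈ F, e.1 ≠ e.2

/-- The edge set `F` contains a directed cycle. -/
def HasDirectedCycle (F : Finset (V × V)) : Prop :=
  ∃ v : V, Relation.TransGen (fun a b => (a, b) ∈ F) v v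

/-- The Laplacian matrix `A_k` of the labeled digraph `(V, F, k)`:
`(A_k)_{i,j} = k_{j→i}` if `(j→i) ∈ F`, `(A_k)_{i,i} = -∑_{(i→j)∈F} k_{i→j}`, and `0` otherwise. -/
noncomputable def digraphLaplacian [Fintype V] [DecidableEq V]
    (F : Finset (V × V)) (k : V × V → ℝ) : Matrix V V ℝ :=
  Matrix.of fun i j =>
    if i = j then -(∑ e ∈ F.filter (fun e => e.1 = i), k e)
    else if (j, i) ∈ F then k (j, i) else 0

/-- `T` is a directed spanning tree of the strongly connected digraph `E`, rooted at `i`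
and directed towards the root: no directed cycle, and every vertex except `i`
is the source of exactly one edge. -/
def IsSpanningTreeTo [DecidableEq V] (E : Finset (V × V)) (i : V)
    (T : Finset (V × V)) : Prop :=
  T ⊆ E ∧ ¬ HasDirectedCycle T ∧
    ∀ j : V, j ≠ i → (T.filter (fun e => e.1 = j)).card = 1

open scoped Classical in
/-- The tree constant `(K_k)_i = ∑_{T ∈ T_i} ∏_{(j→j')∈T} k_{j→j'}`. -/
noncomputable def treeConst [Fintype V] [DecidableEq V]
    (E : Finset (V × V)) (k : V × V → ℝ) (i : V) : ℝ :=
  ∑ T ∈ E.powerset.filter (fun T => IsSpanningTreeTo E i T), ∏ e ∈ T, k e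

/-- The incidence matrix of the digraph with edge set `F`: in the column of edge `(j→j')`,
entry `-1` in row `j`, entry `+1` in row `j'`, and `0` elsewhere. -/
noncomputable def incidence [DecidableEq V] (F : Finset (V × V)) :
    Matrix V {e : V × V // e ∈ F} ℝ :=
  Matrix.of fun i e =>
    (if (e : V × V).2 = i then (1 : ℝ) else 0) - (if (e : V × V).1 = i then (1 : ℝ) else 0)

/-- A chain graph on the vertex set `V`: for some enumeration `i_1, …, i_m` of `V`, the
edge set is `{i_1 → i_2, i_2 → i_3, …, i_{m-1} → i_m}`. -/
def IsChainGraph {V : Type*} [Fintype V] [DecidableEq V] (F : Finset (V × V)) : Prop :=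
  ∃ g : Fin (Fintype.card V) ≃ V,
    F = Finset.image
      (fun i : Fin (Fintype.card V - 1) =>
        (g ⟨i.1, by have := i.2; omega⟩, g ⟨i.1 + 1, by have := i.2; omega⟩))
      Finset.univ

section TreeAux

variable {V : Type*} [Fintype V] [DecidableEq V]

/-- Reachability to `i` in at most `n` steps. -/
def reachN (E : Finset (V × V)) (i : V) : ℕ → V → Prop
  | 0, v => v = i
  | n + 1, v => v = i ∨ ∃ w, (v, w) ∈ E ∧ reachN E i n w

lemma reachN_of_dReach (E : Finset (V × V)) (i v : V) (h : dReach E v i) :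
    ∃ n, reachN E i n v := by
  induction h using Relation.ReflTransGen.head_induction_on with
  | refl => exact ⟨0, rfl⟩
  | head hab _ ih =>
    obtain ⟨n, hn⟩ := ih
    exact ⟨n + 1, Or.inr ⟨_, hab, hn⟩⟩

lemma exists_spanning_tree (E : Finset (V × V)) (hsc : StronglyConnected E) (i : V) :
    ∃ T, IsSpanningTreeTo E i T := by
  classical
  have hex : ∀ v : V, ∃ n, reachN E i n v := fun v => reachN_of_dReach E i v (hsc v i)
  set d : V → ℕ := fun v => Nat.find (hex v) with hd
  have hstep : ∀ v, ∃ w, v ≠ i → ((v, w) ∈ E ∧ d w < d v) := by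
    intro v
    by_cases hv : v = i
    · exact ⟨i, fun h => absurd hv h⟩
    · have hspec : reachN E i (d v) v := Nat.find_spec (hex v)
      have hd0 : d v ≠ 0 := by
        intro h0
        rw [h0] at hspec
        exact hv hspec
      obtain ⟨n, hn⟩ : ∃ n, d v = n + 1 := ⟨d v - 1, by omega⟩
      rw [hn] at hspec
      rcases hspec with h | ⟨w, hw, hwn⟩
      · exact absurd h hv
      · refine ⟨w, fun _ => ⟨hw, ?_⟩⟩
        have : d w ≤ n := Nat.find_le hwn
        omega
  choose f hf using hstep
  refine ⟨(Finset.univ.filter (fun v => v ≠ i)).image (fun v => (v, f v)), ?_, ?_, ?_⟩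
  · intro e he
    simp only [Finset.mem_image, Finset.mem_filter, Finset.mem_univ, true_and] at he
    obtain ⟨v, hv, rfl⟩ := he
    exact (hf v hv).1
  · rintro ⟨v, hv⟩
    have key : ∀ a b : V,
        Relation.TransGen (fun a b =>
          (a, b) ∈ (Finset.univ.filter (fun v => v ≠ i)).image (fun v => (v, f v))) a b →
        d b < d a := by
      have step : ∀ a b : V,
          (a, b) ∈ (Finset.univ.filter (fun v => v ≠ i)).image (fun v => (v, f v)) →
          d b < d a := by
        intro a b hab
        simp only [Finset.mem_image, Finset.mem_filter, Finset.mem_univ, true_and,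
          Prod.mk.injEq] at hab
        obtain ⟨w, hw, h1, h2⟩ := hab
        subst h1; subst h2
        exact (hf _ hw).2
      intro a b h
      induction h with
      | single h => exact step _ _ h
      | tail _ h ih => exact lt_trans (step _ _ h) ih
    exact lt_irrefl _ (key v v hv)
  · intro j hj
    have : ((Finset.univ.filter (fun v => v ≠ i)).image (fun v => (v, f v))).filter
        (fun e => e.1 = j) = {(j, f j)} := by
      ext e
      simp only [Finset.mem_filter, Finset.mem_image, Finset.mem_univ, true_and,
        Finset.mem_singleton]
      constructor
      · rintro ⟨⟨v, hv, rfl⟩, h1⟩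
        simp only at h1
        subst h1; rfl
      · rintro rfl
        exact ⟨⟨j, hj, rfl⟩, rfl⟩
    rw [this, Finset.card_singleton]

lemma treeConst_pos (E : Finset (V × V)) (k : V × V → ℝ) (hk : ∀ e ∈ E, 0 < k e)
    (hsc : StronglyConnected E) (i : V) : 0 < treeConst E k i := by
  classical
  obtain ⟨T, hT⟩ := exists_spanning_tree E hsc i
  unfold treeConst
  apply Finset.sum_pos
  · intro T' hT'
    rw [Finset.mem_filter, Finset.mem_powerset] at hT'
    exact Finset.prod_pos fun e he => hk e (hT'.1 he)
  · exact ⟨T, by rw [Finset.mem_filter, Finset.mem_powerset]; exact ⟨hT.1, hT⟩⟩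

lemma treeConst_nonneg (E : Finset (V × V)) (k : V × V → ℝ) (hk : ∀ e ∈ E, 0 < k e)
    (hsc : StronglyConnected E) (i : V) : 0 ≤ treeConst E k i :=
  (treeConst_pos E k hk hsc i).le

end TreeAux
section ChainAux

set_option linter.unusedSectionVars false

lemma exists_cross {V : Type*} (E : Finset (V × V)) (P : V → Prop) (u l : V)
    (hu : ¬ P u) (hl : P l) (h : dReach E u l) :
    ∃ p q : V, (p, q) ∈ E ∧ ¬ P p ∧ P q := by
  revert hl
  induction h with
  | refl => intro h; exact absurd h hu
  | @tail b c hab hbc ih =>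
    intro hc
    by_cases hb : P b
    · exact ih hb
    · exact ⟨b, c, hbc, hb, hc⟩

variable {V : Type*} [Fintype V] [DecidableEq V]

/-- The edge of the chain graph corresponding to index `i`. -/
def chainEdge (g : Fin (Fintype.card V) ≃ V) {F : Finset (V × V)}
    (hFeq : F = Finset.image
      (fun i : Fin (Fintype.card V - 1) =>
        (g ⟨i.1, by have := i.2; omega⟩, g ⟨i.1 + 1, by have := i.2; omega⟩))
      Finset.univ)
    (i : Fin (Fintype.card V - 1)) : {e : V × V // e ∈ F} :=
  ⟨(g ⟨i.1, by have := i.2; omega⟩, g ⟨i.1 + 1, by have := i.2; omega⟩), by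
    rw [hFeq]; exact Finset.mem_image_of_mem _ (Finset.mem_univ i)⟩

variable (g : Fin (Fintype.card V) ≃ V) {F : Finset (V × V)}
    (hFeq : F = Finset.image
      (fun i : Fin (Fintype.card V - 1) =>
        (g ⟨i.1, by have := i.2; omega⟩, g ⟨i.1 + 1, by have := i.2; omega⟩))
      Finset.univ)

lemma chainEdge_surj (e : {e : V × V // e ∈ F}) : ∃ i, chainEdge g hFeq i = e := by
  obtain ⟨e, he⟩ := e
  rw [hFeq] at he
  obtain ⟨i, -, hi⟩ := Finset.mem_image.mp he
  exact ⟨i, Subtype.ext hi⟩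

lemma chainEdge_inj {i j : Fin (Fintype.card V - 1)}
    (h : chainEdge g hFeq i = chainEdge g hFeq j) : i = j := by
  have h1 : (chainEdge g hFeq i).1.1 = (chainEdge g hFeq j).1.1 := by rw [h]
  simp only [chainEdge] at h1
  have h2 := g.injective h1
  have h3 : i.1 = j.1 := by simpa using h2
  exact Fin.ext h3

lemma incidence_sum_le (a j : Fin (Fintype.card V - 1)) :
    ∑ x ∈ Finset.univ.filter (fun x : Fin (Fintype.card V) => x.1 ≤ a.1),
      incidence F (g x) (chainEdge g hFeq j) = if j = a then (-1 : ℝ) else 0 := by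
  have hval : ∀ x : Fin (Fintype.card V),
      incidence F (g x) (chainEdge g hFeq j) =
      (if (⟨j.1 + 1, by have := j.2; omega⟩ : Fin (Fintype.card V)) = x then (1:ℝ) else 0)
      - (if (⟨j.1, by have := j.2; omega⟩ : Fin (Fintype.card V)) = x then (1:ℝ) else 0) := by
    intro x
    simp only [incidence, chainEdge, Matrix.of_apply, Equiv.apply_eq_iff_eq]
  simp only [hval]
  rw [Finset.sum_sub_distrib, Finset.sum_ite_eq, Finset.sum_ite_eq]
  simp only [Finset.mem_filter, Finset.mem_univ, true_and]
  by_cases h : j = a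
  · subst h
    rw [if_neg (by omega), if_pos (le_refl _)]
    norm_num
  · have hne : j.1 ≠ a.1 := fun hc => h (Fin.ext hc)
    rcases lt_or_gt_of_ne hne with hlt | hgt
    · rw [if_pos (by omega), if_pos (by omega), if_neg h]
      norm_num
    · rw [if_neg (by omega), if_neg (by omega), if_neg h]
      norm_num

lemma incidence_sum_gt (a j : Fin (Fintype.card V - 1)) :
    ∑ x ∈ Finset.univ.filter (fun x : Fin (Fintype.card V) => a.1 < x.1),
      incidence F (g x) (chainEdge g hFeq j) = if j = a then (1 : ℝ) else 0 := by
  have hval : ∀ x : Fin (Fintype.card V),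
      incidence F (g x) (chainEdge g hFeq j) =
      (if (⟨j.1 + 1, by have := j.2; omega⟩ : Fin (Fintype.card V)) = x then (1:ℝ) else 0)
      - (if (⟨j.1, by have := j.2; omega⟩ : Fin (Fintype.card V)) = x then (1:ℝ) else 0) := by
    intro x
    simp only [incidence, chainEdge, Matrix.of_apply, Equiv.apply_eq_iff_eq]
  simp only [hval]
  rw [Finset.sum_sub_distrib, Finset.sum_ite_eq, Finset.sum_ite_eq]
  simp only [Finset.mem_filter, Finset.mem_univ, true_and]
  by_cases h : j = a
  · subst h
    rw [if_pos (by omega), if_neg (by omega)]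
    norm_num
  · have hne : j.1 ≠ a.1 := fun hc => h (Fin.ext hc)
    rcases lt_or_gt_of_ne hne with hlt | hgt
    · rw [if_neg (by omega), if_neg (by omega), if_neg h]
      norm_num
    · rw [if_pos (by omega), if_pos (by omega), if_neg h]
      norm_num

end ChainAux
section DSum

variable {V : Type*} [Fintype V] [DecidableEq V]
    (g : Fin (Fintype.card V) ≃ V) {F : Finset (V × V)}
    (hFeq : F = Finset.image
      (fun i : Fin (Fintype.card V - 1) =>
        (g ⟨i.1, by have := i.2; omega⟩, g ⟨i.1 + 1, by have := i.2; omega⟩))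
      Finset.univ)

set_option linter.unusedSectionVars false

lemma double_sum_eq (E : Finset (V × V)) (k : V × V → ℝ)
    (A : Matrix {e : V × V // e ∈ F} {e : V × V // e ∈ F} ℝ)
    (hA : digraphLaplacian E k * Matrix.diagonal (treeConst E k) =
      -(incidence F * A * (incidence F)ᵀ))
    (a b : Fin (Fintype.card V - 1)) (s t : Finset (Fin (Fintype.card V))) (c1 c2 : ℝ)
    (hs : ∀ j, ∑ x ∈ s, incidence F (g x) (chainEdge g hFeq j) = if j = a then c1 else 0)
    (ht : ∀ j, ∑ y ∈ t, incidence F (g y) (chainEdge g hFeq j) = if j = b then c2 else 0) :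
    ∑ x ∈ s, ∑ y ∈ t,
        (digraphLaplacian E k * Matrix.diagonal (treeConst E k)) (g x) (g y) =
      -(c1 * A (chainEdge g hFeq a) (chainEdge g hFeq b) * c2) := by
  classical
  have hbij : Function.Bijective (chainEdge g hFeq) :=
    ⟨fun i j h => chainEdge_inj g hFeq h, fun e => chainEdge_surj g hFeq e⟩
  have reidx : ∀ (f : {e : V × V // e ∈ F} → ℝ),
      ∑ e, f e = ∑ j : Fin (Fintype.card V - 1), f (chainEdge g hFeq j) :=
    fun f => (Fintype.sum_bijective _ hbij _ f (fun _ => rfl)).symm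
  have main : ∑ x ∈ s, ∑ y ∈ t, (incidence F * A * (incidence F)ᵀ) (g x) (g y)
      = ∑ e' : {e : V × V // e ∈ F},
          (∑ e : {e : V × V // e ∈ F},
            (∑ x ∈ s, incidence F (g x) e) * A e e') *
          (∑ y ∈ t, incidence F (g y) e') := by
    have h1 : ∀ x : Fin (Fintype.card V),
        ∑ y ∈ t, (incidence F * A * (incidence F)ᵀ) (g x) (g y)
        = ∑ e' : {e : V × V // e ∈ F},
            (incidence F * A) (g x) e' * (∑ y ∈ t, incidence F (g y) e') := by
      intro x
      simp only [Matrix.mul_apply, Matrix.transpose_apply]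
      rw [Finset.sum_comm]
      exact Finset.sum_congr rfl fun e' _ => (Finset.mul_sum _ _ _).symm
    simp only [h1]
    rw [Finset.sum_comm]
    refine Finset.sum_congr rfl fun e' _ => ?_
    rw [← Finset.sum_mul]
    congr 1
    simp only [Matrix.mul_apply]
    rw [Finset.sum_comm]
    exact Finset.sum_congr rfl fun e _ => (Finset.sum_mul _ _ _).symm
  have h2 : ∀ e' : {e : V × V // e ∈ F},
      (∑ e, (∑ x ∈ s, incidence F (g x) e) * A e e')
      = ∑ j, (if j = a then c1 else 0) * A (chainEdge g hFeq j) e' := by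
    intro e'
    rw [reidx (fun e => (∑ x ∈ s, incidence F (g x) e) * A e e')]
    exact Finset.sum_congr rfl fun j _ => by rw [hs j]
  rw [hA]
  simp only [Matrix.neg_apply, Finset.sum_neg_distrib]
  rw [main]
  rw [reidx (fun e' => (∑ e, (∑ x ∈ s, incidence F (g x) e) * A e e') *
    (∑ y ∈ t, incidence F (g y) e'))]
  simp only [h2, ht]
  simp only [ite_mul, zero_mul, mul_ite, mul_zero, Finset.sum_ite_eq', Finset.mem_univ,
    if_true]

end DSum
/-- (Proposition 2) For a strongly connected labeled simple digraph and a chain graph `G_ℰ`,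
the core matrix `𝒜_{k,ℰ}`, i.e. the unique matrix with
`A_k diag(K_k) = -I_ℰ 𝒜_{k,ℰ} I_ℰᵀ`, is nonnegative with positive diagonal. -/
theorem core_matrix_chain_nonneg_pos_diag
    {V : Type*} [Fintype V] [DecidableEq V]
    (E : Finset (V × V)) (hloop : NoSelfLoops E)
    (k : V × V → ℝ) (hk : ∀ e ∈ E, 0 < k e)
    (hsc : StronglyConnected E)
    (F : Finset (V × V)) (hF : IsChainGraph F) :
    ∀ A : Matrix {e : V × V // e ∈ F} {e : V × V // e ∈ F} ℝ,
      digraphLaplacian E k * Matrix.diagonal (treeConst E k) = -(incidence F * A * (incidence F)ᵀ) →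
      (∀ e e' : {e : V × V // e ∈ F}, 0 ≤ A e e') ∧
      (∀ e : {e : V × V // e ∈ F}, 0 < A e e) := by
  intro A hA
  obtain ⟨g, hFeq⟩ := hF
  have hKpos := treeConst_pos E k hk hsc
  have hMoff : ∀ x y : V, x ≠ y →
      (digraphLaplacian E k * Matrix.diagonal (treeConst E k)) x y =
      (if (y, x) ∈ E then k (y, x) else 0) * treeConst E k y := by
    intro x y hxy
    rw [Matrix.mul_diagonal]
    congr 1
    simp [digraphLaplacian, hxy]
  have hMnn : ∀ x y : V, x ≠ y →
      0 ≤ (digraphLaplacian E k * Matrix.diagonal (treeConst E k)) x y := by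
    intro x y hxy
    rw [hMoff x y hxy]
    refine mul_nonneg ?_ (hKpos y).le
    split_ifs with h
    · exact (hk _ h).le
    · exact le_refl 0
  have formula1 : ∀ a b : Fin (Fintype.card V - 1),
      A (chainEdge g hFeq a) (chainEdge g hFeq b) =
      ∑ x ∈ Finset.univ.filter (fun x : Fin (Fintype.card V) => x.1 ≤ a.1),
        ∑ y ∈ Finset.univ.filter (fun y : Fin (Fintype.card V) => b.1 < y.1),
          (digraphLaplacian E k * Matrix.diagonal (treeConst E k)) (g x) (g y) := by
    intro a b
    have h := double_sum_eq g hFeq E k A hA a b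
      (Finset.univ.filter (fun x : Fin (Fintype.card V) => x.1 ≤ a.1))
      (Finset.univ.filter (fun y : Fin (Fintype.card V) => b.1 < y.1))
      (-1) 1 (fun j => incidence_sum_le g hFeq a j) (fun j => incidence_sum_gt g hFeq b j)
    rw [h]; ring
  have formula2 : ∀ a b : Fin (Fintype.card V - 1),
      A (chainEdge g hFeq a) (chainEdge g hFeq b) =
      ∑ x ∈ Finset.univ.filter (fun x : Fin (Fintype.card V) => a.1 < x.1),
        ∑ y ∈ Finset.univ.filter (fun y : Fin (Fintype.card V) => y.1 ≤ b.1),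
          (digraphLaplacian E k * Matrix.diagonal (treeConst E k)) (g x) (g y) := by
    intro a b
    have h := double_sum_eq g hFeq E k A hA a b
      (Finset.univ.filter (fun x : Fin (Fintype.card V) => a.1 < x.1))
      (Finset.univ.filter (fun y : Fin (Fintype.card V) => y.1 ≤ b.1))
      1 (-1) (fun j => incidence_sum_gt g hFeq a j) (fun j => incidence_sum_le g hFeq b j)
    rw [h]; ring
  constructor
  · intro e e'
    obtain ⟨a, rfl⟩ := chainEdge_surj g hFeq e
    obtain ⟨b, rfl⟩ := chainEdge_surj g hFeq e'
    by_cases hab : a.1 ≤ b.1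
    · rw [formula1 a b]
      refine Finset.sum_nonneg fun x hx => Finset.sum_nonneg fun y hy => ?_
      rw [Finset.mem_filter] at hx hy
      refine hMnn _ _ fun hgxy => ?_
      have : x = y := g.injective hgxy
      subst this
      omega
    · rw [formula2 a b]
      refine Finset.sum_nonneg fun x hx => Finset.sum_nonneg fun y hy => ?_
      rw [Finset.mem_filter] at hx hy
      refine hMnn _ _ fun hgxy => ?_
      have : x = y := g.injective hgxy
      subst this
      omega
  · intro e
    obtain ⟨a, rfl⟩ := chainEdge_surj g hFeq e
    rw [formula1 a a, ← Finset.sum_product']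
    apply Finset.sum_pos'
    · intro p hp
      rw [Finset.mem_product, Finset.mem_filter, Finset.mem_filter] at hp
      refine hMnn _ _ fun hgxy => ?_
      have : p.1 = p.2 := g.injective hgxy
      omega
    · have ha1 : a.1 + 1 < Fintype.card V := by have := a.2; omega
      have ha0 : 0 < Fintype.card V := by omega
      obtain ⟨p, q, hpq, hp, hq⟩ := exists_cross E (fun v => ((g.symm v : Fin _) : ℕ) ≤ a.1)
        (g ⟨a.1 + 1, ha1⟩) (g ⟨0, ha0⟩)
        (by simp) (by simp) (hsc _ _)
      have hp' : ¬ (((g.symm p : Fin (Fintype.card V)) : ℕ) ≤ (a : ℕ)) := hp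
      have hq' : (((g.symm q : Fin (Fintype.card V)) : ℕ) ≤ (a : ℕ)) := hq
      refine ⟨(g.symm q, g.symm p), ?_, ?_⟩
      · rw [Finset.mem_product, Finset.mem_filter, Finset.mem_filter]
        exact ⟨⟨Finset.mem_univ _, hq'⟩, ⟨Finset.mem_univ _, by show ((a:ℕ)) < ((g.symm p : Fin (Fintype.card V)) : ℕ); omega⟩⟩
      · have hne : g (g.symm q) ≠ g (g.symm p) := by
          intro h
          have : g.symm q = g.symm p := g.injective h
          rw [this] at hq'
          exact hp' hq'
        rw [hMoff _ _ hne, Equiv.apply_symm_apply, Equiv.apply_symm_apply, if_pos hpq]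
        exact mul_pos (hk _ hpq) (hKpos p)
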